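/- For every graph F containing a cycle and every graph G satisfying G →nni (F)_2, we have m₂(G) > m₂(F). -/

import Mathlib

open SimpleGraph

/-- `G →nni (F)_r` : every `r`-colouring of the edges of `G` yields a monochromatic
(not necessarily induced) subgraph of `G` isomorphic to `F`. -/
def ArrowNNI {V α : Type*} (G : SimpleGraph V) (F : SimpleGraph α) (r : ℕ) : Prop :=
  ∀ c : Sym2 V → Fin r, ∃ f : F →g G, Function.Injective f ∧
    ∃ k : Fin r, ∀ x y, F.Adj x y → c s(f x, f y) = k

/-- `d2v v e` : the `2`-density of a graph with `v` vertices and `e ≥ 1` edges. -/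
noncomputable def d2v (v e : ℕ) : ℝ :=
  if 3 ≤ v then ((e : ℝ) - 1) / ((v : ℝ) - 2) else 1

/-- The maximum `2`-density `m₂` of a graph: the maximum of the `2`-densities of its
subgraphs with at least one edge. -/
noncomputable def m2 {V : Type*} (G : SimpleGraph V) : ℝ :=
  sSup {x : ℝ | ∃ H : G.Subgraph, H.edgeSet.Nonempty ∧
    x = d2v H.verts.ncard H.edgeSet.ncard}

/- ===================== auxiliary development ===================== -/

namespace M2Aux

open Set

noncomputable def phiR (m : ℝ) (v e : ℕ) : ℝ := (e : ℝ) - 1 - m * ((v : ℝ) - 2)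

section General

variable {V : Type*} {Γ : SimpleGraph V}

lemma subgraph_finite {V : Type*} [Finite V] (Γ : SimpleGraph V) : Finite Γ.Subgraph := by
  have h : Function.Injective
      (fun H : Γ.Subgraph => (H.verts, H.edgeSet)) := by
    intro H1 H2 h
    have h1 : H1.verts = H2.verts := congrArg Prod.fst h
    have h2 : H1.edgeSet = H2.edgeSet := congrArg Prod.snd h
    ext v w
    · rw [h1]
    · constructor
      · intro ha
        exact Subgraph.mem_edgeSet.mp (h2 ▸ Subgraph.mem_edgeSet.mpr ha)
      · intro ha
        exact Subgraph.mem_edgeSet.mp (h2 ▸ Subgraph.mem_edgeSet.mpr ha)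
  exact Finite.of_injective _ h

lemma m2_set_finite {V : Type*} [Finite V] (Γ : SimpleGraph V) :
    {x : ℝ | ∃ H : Γ.Subgraph, H.edgeSet.Nonempty ∧
      x = d2v H.verts.ncard H.edgeSet.ncard}.Finite := by
  have : Finite Γ.Subgraph := subgraph_finite Γ
  apply (Set.finite_range (fun H : Γ.Subgraph => d2v H.verts.ncard H.edgeSet.ncard)).subset
  rintro x ⟨H, -, rfl⟩
  exact ⟨H, rfl⟩

lemma edge_endpoints_mem {H : Γ.Subgraph} :
    H.edgeSet ⊆ {e : Sym2 V | ∀ x ∈ e, x ∈ H.verts} := by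
  intro e he
  induction e using Sym2.ind with
  | _ a b =>
    intro x hx
    rw [Subgraph.mem_edgeSet] at he
    rcases Sym2.mem_iff.mp hx with rfl | rfl
    · exact H.edge_vert he
    · exact H.edge_vert he.symm

lemma verts_ncard_two_le [Finite V] {H : Γ.Subgraph} (h : H.edgeSet.Nonempty) :
    2 ≤ H.verts.ncard := by
  obtain ⟨e, he⟩ := h
  induction e using Sym2.ind with
  | _ a b =>
    rw [Subgraph.mem_edgeSet] at he
    have hab : a ≠ b := he.ne
    have : 1 < H.verts.ncard := by
      rw [Set.one_lt_ncard (H.verts.toFinite)]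
      exact ⟨a, H.edge_vert he, b, H.edge_vert he.symm, hab⟩
    omega

lemma edges_ncard_le_one_of_verts [Finite V] {H : Γ.Subgraph}
    (h : H.verts.ncard ≤ 2) : H.edgeSet.ncard ≤ 1 := by
  rcases H.edgeSet.eq_empty_or_nonempty with he | he
  · simp [he]
  obtain ⟨e, heE⟩ := he
  induction e using Sym2.ind with
  | _ a b =>
    rw [Subgraph.mem_edgeSet] at heE
    have hab : a ≠ b := heE.ne
    have hsub : ({a, b} : Set V) ⊆ H.verts := by
      rintro x (rfl | rfl)
      · exact H.edge_vert heE
      · exact H.edge_vert heE.symm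
    have hcard : ({a, b} : Set V).ncard = 2 := by
      rw [Set.ncard_insert_of_notMem (by simpa using hab) (Set.toFinite _),
        Set.ncard_singleton]
    have hverts : ({a, b} : Set V) = H.verts :=
      Set.eq_of_subset_of_ncard_le hsub (by omega) (H.verts.toFinite)
    have hE : H.edgeSet ⊆ {s(a, b)} := by
      intro e' he'
      induction e' using Sym2.ind with
      | _ c d =>
        rw [Subgraph.mem_edgeSet] at he'
        have hcd : c ≠ d := he'.ne
        have hc : c ∈ ({a, b} : Set V) := hverts ▸ H.edge_vert he'
        have hd : d ∈ ({a, b} : Set V) := hverts ▸ H.edge_vert he'.symm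
        simp only [Set.mem_singleton_iff, Sym2.eq_iff]
        rcases hc with rfl | rfl <;> rcases hd with rfl | rfl <;> tauto
    calc H.edgeSet.ncard ≤ ({s(a,b)} : Set (Sym2 V)).ncard :=
          Set.ncard_le_ncard hE (Set.toFinite _)
      _ = 1 := Set.ncard_singleton _

lemma phi_supinf [Finite V] (m : ℝ) (A B : Γ.Subgraph) :
    phiR m (A ⊔ B).verts.ncard (A ⊔ B).edgeSet.ncard
      + phiR m (A ⊓ B).verts.ncard (A ⊓ B).edgeSet.ncard
    = phiR m A.verts.ncard A.edgeSet.ncard + phiR m B.verts.ncard B.edgeSet.ncard := by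
  have hv : (A ⊔ B).verts.ncard + (A ⊓ B).verts.ncard
      = A.verts.ncard + B.verts.ncard := by
    rw [Subgraph.verts_sup, Subgraph.verts_inf]
    exact Set.ncard_union_add_ncard_inter _ _ (Set.toFinite _) (Set.toFinite _)
  have he : (A ⊔ B).edgeSet.ncard + (A ⊓ B).edgeSet.ncard
      = A.edgeSet.ncard + B.edgeSet.ncard := by
    rw [Subgraph.edgeSet_sup, Subgraph.edgeSet_inf]
    exact Set.ncard_union_add_ncard_inter _ _ (Set.toFinite _) (Set.toFinite _)
  have hv' : ((A ⊔ B).verts.ncard : ℝ) + (A ⊓ B).verts.ncard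
      = A.verts.ncard + B.verts.ncard := by exact_mod_cast hv
  have he' : ((A ⊔ B).edgeSet.ncard : ℝ) + (A ⊓ B).edgeSet.ncard
      = A.edgeSet.ncard + B.edgeSet.ncard := by exact_mod_cast he
  unfold phiR
  linear_combination he' - m * hv'

end General

lemma sym2_map_injOn {α β : Type*} {g : α → β} {s : Set α} (h : Set.InjOn g s) :
    Set.InjOn (Sym2.map g) {e : Sym2 α | ∀ x ∈ e, x ∈ s} := by
  intro e he f hf heq
  induction e using Sym2.ind with
  | _ a b =>
    induction f using Sym2.ind with
    | _ c d =>
      have ha : a ∈ s := he a (by simp)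
      have hb : b ∈ s := he b (by simp)
      have hc : c ∈ s := hf c (by simp)
      have hd : d ∈ s := hf d (by simp)
      rw [Sym2.map_pair_eq, Sym2.map_pair_eq, Sym2.eq_iff] at heq
      rw [Sym2.eq_iff]
      rcases heq with ⟨h1, h2⟩ | ⟨h1, h2⟩
      · exact Or.inl ⟨h ha hc h1, h hb hd h2⟩
      · exact Or.inr ⟨h ha hd h1, h hb hc h2⟩

section Copies

variable {α β : Type} {F : SimpleGraph α} {G : SimpleGraph β}

/-- the set of edges of a copy `g` of the pattern `F₀` -/
def edgesOf (F₀ : F.Subgraph) (g : α → β) : Set (Sym2 β) :=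
  Sym2.map g '' F₀.edgeSet

/-- `g` is a copy of `F₀` inside the subgraph `H` of `G`. -/
def IsCopyIn (F₀ : F.Subgraph) (H : G.Subgraph) (g : α → β) : Prop :=
  Set.InjOn g F₀.verts ∧ ∀ ⦃x y⦄, F₀.Adj x y → H.Adj (g x) (g y)

/-- The image subgraph of a copy. -/
def copySub (G : SimpleGraph β) (F₀ : F.Subgraph) (g : α → β) : G.Subgraph where
  verts := g '' F₀.verts
  Adj a b := (∃ x y, F₀.Adj x y ∧ g x = a ∧ g y = b) ∧ G.Adj a b
  adj_sub h := h.2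
  edge_vert h := by
    obtain ⟨⟨x, y, hxy, rfl, -⟩, -⟩ := h
    exact ⟨x, F₀.edge_vert hxy, rfl⟩
  symm := ⟨fun a b h => by
    obtain ⟨⟨x, y, hxy, hx, hy⟩, hGadj⟩ := h
    exact ⟨⟨y, x, hxy.symm, hy, hx⟩, hGadj.symm⟩⟩

variable {F₀ : F.Subgraph} {H : G.Subgraph}

lemma edgesOf_subset_of_copy {g : α → β} (hg : IsCopyIn F₀ H g) :
    edgesOf F₀ g ⊆ H.edgeSet := by
  rintro e ⟨e', he', rfl⟩
  induction e' using Sym2.ind with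
  | _ x y =>
    rw [Subgraph.mem_edgeSet] at he'
    rw [Sym2.map_pair_eq]
    exact Subgraph.mem_edgeSet.mpr (hg.2 he')

lemma copySub_edgeSet {g : α → β} (hg : IsCopyIn F₀ H g) :
    (copySub G F₀ g).edgeSet = edgesOf F₀ g := by
  ext e
  induction e using Sym2.ind with
  | _ a b =>
    constructor
    · intro h
      obtain ⟨⟨x, y, hxy, rfl, rfl⟩, -⟩ := Subgraph.mem_edgeSet.mp h
      exact ⟨s(x, y), Subgraph.mem_edgeSet.mpr hxy, Sym2.map_pair_eq g x y⟩
    · rintro ⟨e', he', hmap⟩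
      induction e' using Sym2.ind with
      | _ x y =>
        rw [Sym2.map_pair_eq, Sym2.eq_iff] at hmap
        rw [Subgraph.mem_edgeSet] at he' ⊢
        have hGadj : G.Adj (g x) (g y) := (hg.2 he').adj_sub
        rcases hmap with ⟨rfl, rfl⟩ | ⟨rfl, rfl⟩
        · exact ⟨⟨x, y, he', rfl, rfl⟩, hGadj⟩
        · exact ⟨⟨y, x, he'.symm, rfl, rfl⟩, hGadj.symm⟩

lemma edgesOf_ncard {g : α → β} (hinj : Set.InjOn g F₀.verts) :
    (edgesOf F₀ g).ncard = F₀.edgeSet.ncard :=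
  Set.ncard_image_of_injOn ((sym2_map_injOn hinj).mono edge_endpoints_mem)

lemma copySub_verts_ncard {g : α → β} (hinj : Set.InjOn g F₀.verts) :
    (copySub G F₀ g).verts.ncard = F₀.verts.ncard :=
  Set.ncard_image_of_injOn hinj

/-- pull back a subgraph of a copy to a subgraph of the pattern -/
def pullback (F₀ : F.Subgraph) (g : α → β) (C : G.Subgraph) : F.Subgraph where
  verts := F₀.verts ∩ (g ⁻¹' C.verts)
  Adj x y := F₀.Adj x y ∧ C.Adj (g x) (g y)
  adj_sub h := F₀.adj_sub h.1
  edge_vert h := ⟨F₀.edge_vert h.1, C.edge_vert h.2⟩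
  symm := ⟨fun x y h => ⟨F₀.adj_symm h.1, C.adj_symm h.2⟩⟩

lemma pullback_le (g : α → β) (C : G.Subgraph) : pullback F₀ g C ≤ F₀ :=
  ⟨Set.inter_subset_left, fun {_ _} h => h.1⟩

lemma pullback_verts [Finite α] {g : α → β} (hinj : Set.InjOn g F₀.verts)
    {C : G.Subgraph} (hC : C ≤ copySub G F₀ g) :
    (pullback F₀ g C).verts.ncard = C.verts.ncard := by
  have himg : g '' (pullback F₀ g C).verts = C.verts := by
    apply Set.Subset.antisymm
    · rintro v ⟨x, ⟨-, hx2⟩, rfl⟩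
      exact hx2
    · intro v hv
      obtain ⟨x, hx, rfl⟩ := hC.1 hv
      exact ⟨x, ⟨hx, hv⟩, rfl⟩
  rw [← himg]
  exact (Set.ncard_image_of_injOn (hinj.mono Set.inter_subset_left)).symm

lemma pullback_edges [Finite α] {g : α → β} (hinj : Set.InjOn g F₀.verts)
    {C : G.Subgraph} (hC : C ≤ copySub G F₀ g) :
    (pullback F₀ g C).edgeSet.ncard = C.edgeSet.ncard := by
  have himg : Sym2.map g '' (pullback F₀ g C).edgeSet = C.edgeSet := by
    apply Set.Subset.antisymm
    · rintro e ⟨e', he', rfl⟩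
      induction e' using Sym2.ind with
      | _ x y =>
        rw [Subgraph.mem_edgeSet] at he'
        rw [Sym2.map_pair_eq]
        exact Subgraph.mem_edgeSet.mpr he'.2
    · intro e he
      induction e using Sym2.ind with
      | _ a b =>
        have hadj : C.Adj a b := Subgraph.mem_edgeSet.mp he
        obtain ⟨⟨x, y, hxy, rfl, rfl⟩, -⟩ := hC.2 hadj
        exact ⟨s(x, y), Subgraph.mem_edgeSet.mpr ⟨hxy, hadj⟩, Sym2.map_pair_eq g x y⟩
  have hsub : (pullback F₀ g C).edgeSet ⊆ {e : Sym2 α | ∀ x ∈ e, x ∈ F₀.verts} :=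
    fun e he => edge_endpoints_mem ((Subgraph.edgeSet_mono (pullback_le g C)) he)
  rw [← himg, Set.ncard_image_of_injOn ((sym2_map_injOn hinj).mono hsub)]

/-- union of copies of `F₀`, grown by gluing copies sharing at least one edge -/
inductive Good (F₀ : F.Subgraph) (H : G.Subgraph) : G.Subgraph → Prop
  | base (g : α → β) (hg : IsCopyIn F₀ H g) : Good F₀ H (copySub G F₀ g)
  | glue (U : G.Subgraph) (g : α → β) (hU : Good F₀ H U) (hg : IsCopyIn F₀ H g)
      (h1 : (U.edgeSet ∩ edgesOf F₀ g).Nonempty)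
      (h2 : ¬ edgesOf F₀ g ⊆ U.edgeSet) : Good F₀ H (U ⊔ copySub G F₀ g)

/-- all the numeric hypotheses needed for the structural analysis -/
structure Config (F₀ : F.Subgraph) (G : SimpleGraph β) (m : ℝ) : Prop where
  hyp : ∀ C : G.Subgraph, C.edgeSet.Nonempty →
    phiR m C.verts.ncard C.edgeSet.ncard ≤ 0
  bal1 : ∀ J : F.Subgraph, J.edgeSet.Nonempty →
    phiR m J.verts.ncard J.edgeSet.ncard ≤ 0
  bal2 : ∀ J : F.Subgraph, J ≤ F₀ → 2 ≤ J.edgeSet.ncard →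
    J.edgeSet.ncard < F₀.edgeSet.ncard → phiR m J.verts.ncard J.edgeSet.ncard < 0
  phi0 : phiR m F₀.verts.ncard F₀.edgeSet.ncard = 0
  he3 : 3 ≤ F₀.edgeSet.ncard

variable [Finite α] [Finite β] {m : ℝ}

lemma edgesOf_nonempty (S : Config F₀ G m) (g : α → β) : (edgesOf F₀ g).Nonempty := by
  have h3 := S.he3
  have : F₀.edgeSet.Nonempty := by
    rw [← Set.ncard_pos (Set.toFinite _)]
    omega
  obtain ⟨e, he⟩ := this
  exact ⟨Sym2.map g e, e, he, rfl⟩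

lemma copy_phi (S : Config F₀ G m) {g : α → β} (hg : IsCopyIn F₀ H g) :
    phiR m (copySub G F₀ g).verts.ncard (copySub G F₀ g).edgeSet.ncard = 0 := by
  rw [copySub_edgeSet hg, edgesOf_ncard hg.1, copySub_verts_ncard hg.1]
  exact S.phi0

/-- if a subgraph with `φ = 0` meets a copy in at least two edges but does not contain
all of its edges, we get a contradiction with the density hypothesis -/
lemma contra_big (S : Config F₀ G m) {A : G.Subgraph}
    (hA : phiR m A.verts.ncard A.edgeSet.ncard = 0) {g : α → β} (hg : IsCopyIn F₀ H g)
    (h2card : 2 ≤ (A.edgeSet ∩ edgesOf F₀ g).ncard)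
    (hnsub : ¬ edgesOf F₀ g ⊆ A.edgeSet) : False := by
  set B := copySub G F₀ g with hB
  have hBe : B.edgeSet = edgesOf F₀ g := copySub_edgeSet hg
  have hIe : (A ⊓ B).edgeSet = A.edgeSet ∩ edgesOf F₀ g := by
    rw [Subgraph.edgeSet_inf, hBe]
  have hlt : (A ⊓ B).edgeSet.ncard < F₀.edgeSet.ncard := by
    have hsub : (A ⊓ B).edgeSet ⊂ edgesOf F₀ g := by
      rw [hIe]
      refine ⟨Set.inter_subset_right, fun hcon => ?_⟩
      exact hnsub (fun e he => (hcon he).1)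
    calc (A ⊓ B).edgeSet.ncard < (edgesOf F₀ g).ncard :=
          Set.ncard_lt_ncard hsub (Set.toFinite _)
      _ = F₀.edgeSet.ncard := edgesOf_ncard hg.1
  -- pull back A ⊓ B
  have hIle : A ⊓ B ≤ B := inf_le_right
  have hv' : (pullback F₀ g (A ⊓ B)).verts.ncard = (A ⊓ B).verts.ncard :=
    pullback_verts hg.1 hIle
  have he' : (pullback F₀ g (A ⊓ B)).edgeSet.ncard = (A ⊓ B).edgeSet.ncard :=
    pullback_edges hg.1 hIle
  have hneg : phiR m (A ⊓ B).verts.ncard (A ⊓ B).edgeSet.ncard < 0 := by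
    rw [← hv', ← he']
    exact S.bal2 _ (pullback_le g (A ⊓ B)) (by rw [he', hIe]; exact h2card)
      (by rw [he']; exact hlt)
  have hBphi : phiR m B.verts.ncard B.edgeSet.ncard = 0 := copy_phi S hg
  have hsup := phi_supinf m A B
  have hsupe : (A ⊔ B).edgeSet.Nonempty := by
    rw [Subgraph.edgeSet_sup, hBe]
    exact (edgesOf_nonempty S g).mono Set.subset_union_right
  have := S.hyp (A ⊔ B) hsupe
  linarith

/-- gluing a copy onto a `φ = 0` subgraph along at least one but not all edges:
the overlap is a single edge and the union has `φ = 0` again. -/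
lemma glue_analysis (S : Config F₀ G m) {A : G.Subgraph}
    (hA : phiR m A.verts.ncard A.edgeSet.ncard = 0) {g : α → β} (hg : IsCopyIn F₀ H g)
    (h1 : (A.edgeSet ∩ edgesOf F₀ g).Nonempty)
    (h2 : ¬ edgesOf F₀ g ⊆ A.edgeSet) :
    (A.edgeSet ∩ edgesOf F₀ g).ncard = 1 ∧
      phiR m (A ⊔ copySub G F₀ g).verts.ncard (A ⊔ copySub G F₀ g).edgeSet.ncard = 0 := by
  set B := copySub G F₀ g with hB
  have hBe : B.edgeSet = edgesOf F₀ g := copySub_edgeSet hg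
  have hIe : (A ⊓ B).edgeSet = A.edgeSet ∩ edgesOf F₀ g := by
    rw [Subgraph.edgeSet_inf, hBe]
  have hone : (A.edgeSet ∩ edgesOf F₀ g).ncard = 1 := by
    have hge : 1 ≤ (A.edgeSet ∩ edgesOf F₀ g).ncard := by
      rw [Nat.succ_le_iff, Set.ncard_pos (Set.toFinite _)]
      exact h1
    by_contra hne
    exact contra_big S hA hg (by omega) h2
  refine ⟨hone, ?_⟩
  -- φ(A ⊓ B) = 0 : by bal1 applied to the pullback, and the density hypothesis
  have hIle : A ⊓ B ≤ B := inf_le_right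
  have hv' : (pullback F₀ g (A ⊓ B)).verts.ncard = (A ⊓ B).verts.ncard :=
    pullback_verts hg.1 hIle
  have he' : (pullback F₀ g (A ⊓ B)).edgeSet.ncard = (A ⊓ B).edgeSet.ncard :=
    pullback_edges hg.1 hIle
  have hInonempty : (pullback F₀ g (A ⊓ B)).edgeSet.Nonempty := by
    rw [← Set.ncard_pos (Set.toFinite _), he', hIe, hone]
    omega
  have hle0 : phiR m (A ⊓ B).verts.ncard (A ⊓ B).edgeSet.ncard ≤ 0 := by
    rw [← hv', ← he']
    exact S.bal1 _ hInonempty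
  have hBphi : phiR m B.verts.ncard B.edgeSet.ncard = 0 := copy_phi S hg
  have hsup := phi_supinf m A B
  have hsupe : (A ⊔ B).edgeSet.Nonempty := by
    rw [Subgraph.edgeSet_sup, hBe]
    exact (edgesOf_nonempty S g).mono Set.subset_union_right
  have hle0' := S.hyp (A ⊔ B) hsupe
  linarith

/-- two copies sharing an edge but with different edge sets share exactly one edge -/
lemma overlap (S : Config F₀ G m) {g g' : α → β}
    (hg : IsCopyIn F₀ H g) (hg' : IsCopyIn F₀ H g')
    (h1 : (edgesOf F₀ g ∩ edgesOf F₀ g').Nonempty)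
    (hne : edgesOf F₀ g' ≠ edgesOf F₀ g) :
    (edgesOf F₀ g ∩ edgesOf F₀ g').ncard = 1 := by
  have hA : phiR m (copySub G F₀ g).verts.ncard (copySub G F₀ g).edgeSet.ncard = 0 :=
    copy_phi S hg
  have hnsub : ¬ edgesOf F₀ g' ⊆ (copySub G F₀ g).edgeSet := by
    rw [copySub_edgeSet hg]
    intro hsub
    apply hne
    apply Set.eq_of_subset_of_ncard_le hsub _ (Set.toFinite _)
    rw [edgesOf_ncard hg.1, edgesOf_ncard hg'.1]
  have := (glue_analysis S hA hg' (by rw [copySub_edgeSet hg]; exact h1) hnsub).1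
  rw [copySub_edgeSet hg] at this
  exact this

/-- The invariant carried along `Good` unions: `φ = 0` and existence of a copy with a
"private" edge. -/
lemma good_invariant (S : Config F₀ G m) {U : G.Subgraph} (hU : Good F₀ H U) :
    phiR m U.verts.ncard U.edgeSet.ncard = 0 ∧
      ∃ g p, IsCopyIn F₀ H g ∧ p ∈ edgesOf F₀ g ∧ edgesOf F₀ g ⊆ U.edgeSet ∧
        ∀ g', IsCopyIn F₀ H g' → p ∈ edgesOf F₀ g' → edgesOf F₀ g' ⊆ U.edgeSet →
          edgesOf F₀ g' = edgesOf F₀ g := by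
  induction hU with
  | base g hg =>
      refine ⟨copy_phi S hg, g, (edgesOf_nonempty S g).choose, hg,
        (edgesOf_nonempty S g).choose_spec, by rw [copySub_edgeSet hg], ?_⟩
      intro g' hg' hp hsub
      rw [copySub_edgeSet hg] at hsub
      apply Set.eq_of_subset_of_ncard_le hsub _ (Set.toFinite _)
      rw [edgesOf_ncard hg.1, edgesOf_ncard hg'.1]
  | glue U g hUgood hg h1 h2 ih =>
      obtain ⟨hphi, -⟩ := ih
      obtain ⟨hone, hphi'⟩ := glue_analysis S hphi hg h1 h2
      refine ⟨hphi', ?_⟩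
      -- the new copy g has an edge p' outside U; it is the new "leaf"
      obtain ⟨p', hp'g, hp'U⟩ := Set.not_subset.mp h2
      have hEsup : (U ⊔ copySub G F₀ g).edgeSet = U.edgeSet ∪ edgesOf F₀ g := by
        rw [Subgraph.edgeSet_sup, copySub_edgeSet hg]
      refine ⟨g, p', hg, hp'g, by rw [hEsup]; exact fun e he => Or.inr he, ?_⟩
      intro g' hg' hpg' hsubg'
      by_contra hne
      -- g and g' share exactly the edge p'
      have hshared : (edgesOf F₀ g ∩ edgesOf F₀ g').ncard = 1 :=
        overlap S hg hg' ⟨p', hp'g, hpg'⟩ hne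
      have hsingle : edgesOf F₀ g ∩ edgesOf F₀ g' = {p'} := by
        obtain ⟨a, ha⟩ := Set.ncard_eq_one.mp hshared
        have : p' ∈ ({a} : Set (Sym2 β)) := ha ▸ ⟨hp'g, hpg'⟩
        rw [Set.mem_singleton_iff] at this
        rw [ha, this]
      -- all other edges of g' lie in U
      have hrest : edgesOf F₀ g' \ {p'} ⊆ U.edgeSet := by
        intro e ⟨he, hne'⟩
        rw [Set.mem_singleton_iff] at hne'
        have := hsubg' he
        rw [hEsup] at this
        rcases this with h | h
        · exact h
        · exfalso
          have : e ∈ edgesOf F₀ g ∩ edgesOf F₀ g' := ⟨h, he⟩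
          rw [hsingle, Set.mem_singleton_iff] at this
          exact hne' this
      -- so g' meets U in at least e₀ - 1 ≥ 2 edges, but p' ∉ U: contradiction
      have hcard2 : 2 ≤ (U.edgeSet ∩ edgesOf F₀ g').ncard := by
        have hsub2 : edgesOf F₀ g' \ {p'} ⊆ U.edgeSet ∩ edgesOf F₀ g' :=
          fun e he => ⟨hrest he, he.1⟩
        have hd : (edgesOf F₀ g' \ {p'}).ncard = (edgesOf F₀ g').ncard - 1 :=
          Set.ncard_diff_singleton_of_mem hpg'
        have hc : (edgesOf F₀ g').ncard = F₀.edgeSet.ncard := edgesOf_ncard hg'.1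
        have h3 := S.he3
        have := Set.ncard_le_ncard hsub2 (Set.toFinite _)
        omega
      have hnsub' : ¬ edgesOf F₀ g' ⊆ U.edgeSet := fun hcon => hp'U (hcon hpg')
      exact contra_big S hphi hg' hcard2 hnsub'

/-- Key claim: if there is a copy at all, there is a copy with an edge contained
in no copy with a different edge set. -/
lemma exists_private_edge (S : Config F₀ G m) (hex : ∃ g, IsCopyIn F₀ H g) :
    ∃ g p, IsCopyIn F₀ H g ∧ p ∈ edgesOf F₀ g ∧
      ∀ g', IsCopyIn F₀ H g' → p ∈ edgesOf F₀ g' → edgesOf F₀ g' = edgesOf F₀ g := by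
  obtain ⟨g₀, hg₀⟩ := hex
  set T : Set ℕ := {n | ∃ U : G.Subgraph, Good F₀ H U ∧ U.edgeSet.ncard = n} with hT
  have hTne : T.Nonempty := ⟨_, _, Good.base g₀ hg₀, rfl⟩
  have hTbdd : BddAbove T := by
    refine ⟨G.edgeSet.ncard, ?_⟩
    rintro n ⟨U, -, rfl⟩
    exact Set.ncard_le_ncard U.edgeSet_subset (Set.toFinite _)
  obtain ⟨U, hUgood, hUcard⟩ := Nat.sSup_mem hTne hTbdd
  obtain ⟨-, g, p, hg, hp, hsub, hpriv⟩ := good_invariant S hUgood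
  refine ⟨g, p, hg, hp, ?_⟩
  intro g' hg' hp'
  by_cases hsub' : edgesOf F₀ g' ⊆ U.edgeSet
  · exact hpriv g' hg' hp' hsub'
  · exfalso
    have hglue : Good F₀ H (U ⊔ copySub G F₀ g') :=
      Good.glue U g' hUgood hg' ⟨p, hsub hp, hp'⟩ hsub'
    have hbig : U.edgeSet.ncard < (U ⊔ copySub G F₀ g').edgeSet.ncard := by
      apply Set.ncard_lt_ncard _ (Set.toFinite _)
      rw [Subgraph.edgeSet_sup, copySub_edgeSet hg']
      refine ⟨Set.subset_union_left, fun hcon => ?_⟩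
      obtain ⟨q, hq, hqU⟩ := Set.not_subset.mp hsub'
      exact hqU (hcon (Or.inr hq))
    have : (U ⊔ copySub G F₀ g').edgeSet.ncard ≤ sSup T :=
      le_csSup hTbdd ⟨_, hglue, rfl⟩
    omega

/-- Main colouring lemma: under the density assumptions, there is a `2`-colouring of the
edges such that no copy of `F₀` is monochromatic. -/
lemma main_colouring (S : Config F₀ G m) :
    ∀ (n : ℕ) (H : G.Subgraph), H.edgeSet.ncard ≤ n →
      ∃ c : Sym2 β → Fin 2, ∀ g, IsCopyIn F₀ H g →
        ∃ p ∈ edgesOf F₀ g, ∃ q ∈ edgesOf F₀ g, c p ≠ c q := by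
  classical
  intro n
  induction n with
  | zero =>
      intro H hH
      refine ⟨fun _ => 0, fun g hg => ?_⟩
      exfalso
      obtain ⟨p, hp⟩ := edgesOf_nonempty S g
      have : p ∈ H.edgeSet := edgesOf_subset_of_copy hg hp
      have hpos : 0 < H.edgeSet.ncard := by
        rw [Set.ncard_pos (Set.toFinite _)]; exact ⟨p, this⟩
      omega
  | succ n ih =>
      intro H hH
      by_cases hex : ∃ g, IsCopyIn F₀ H g
      · obtain ⟨g₀, p₀, hg₀, hp₀, hpriv⟩ := exists_private_edge S hex
        set H' := H.deleteEdges {p₀} with hH'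
        have hH'edges : H'.edgeSet = H.edgeSet \ {p₀} := by
          ext e
          induction e using Sym2.ind with
          | _ a b =>
            simp [hH', Subgraph.deleteEdges_adj, Subgraph.mem_edgeSet]
        have hp₀H : p₀ ∈ H.edgeSet := edgesOf_subset_of_copy hg₀ hp₀
        have hcard' : H'.edgeSet.ncard ≤ n := by
          rw [hH'edges, Set.ncard_diff_singleton_of_mem hp₀H]
          have hpos : 0 < H.edgeSet.ncard := by
            rw [Set.ncard_pos (Set.toFinite _)]; exact ⟨p₀, hp₀H⟩
          omega
        obtain ⟨c', hc'⟩ := ih H' hcard'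
        -- pick another edge of the leaf copy
        have hcardg₀ : 1 < (edgesOf F₀ g₀).ncard := by
          rw [edgesOf_ncard hg₀.1]
          have := S.he3
          omega
        obtain ⟨q₀, hq₀, hq₀ne⟩ := Set.exists_ne_of_one_lt_ncard hcardg₀ p₀
        refine ⟨fun e => if e = p₀ then (if c' q₀ = 0 then 1 else 0) else c' e, ?_⟩
        intro g hg
        by_cases hpg : p₀ ∈ edgesOf F₀ g
        · have heq : edgesOf F₀ g = edgesOf F₀ g₀ := hpriv g hg hpg
          refine ⟨p₀, hpg, q₀, heq ▸ hq₀, ?_⟩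
          simp only [if_pos rfl, if_neg hq₀ne]
          have : ∀ x : Fin 2, (if x = 0 then (1 : Fin 2) else 0) ≠ x := by decide
          exact this (c' q₀)
        · have hgH' : IsCopyIn F₀ H' g := by
            refine ⟨hg.1, fun x y hxy => ?_⟩
            rw [hH', Subgraph.deleteEdges_adj]
            refine ⟨hg.2 hxy, fun hcon => ?_⟩
            rw [Set.mem_singleton_iff] at hcon
            apply hpg
            rw [← hcon]
            exact ⟨s(x, y), Subgraph.mem_edgeSet.mpr hxy, Sym2.map_pair_eq g x y⟩
          obtain ⟨p, hp, q, hq, hcne⟩ := hc' g hgH'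
          have hpne : p ≠ p₀ := fun hcon => hpg (hcon ▸ hp)
          have hqne : q ≠ p₀ := fun hcon => hpg (hcon ▸ hq)
          refine ⟨p, hp, q, hq, ?_⟩
          simp only [if_neg hpne, if_neg hqne]
          exact hcne
      · exact ⟨fun _ => 0, fun g hg => absurd ⟨g, hg⟩ hex⟩

end Copies

end M2Aux

open M2Aux

/-- For every graph `F` containing a cycle and every graph `G` with `G →nni (F)_2`
we have `m₂(G) > m₂(F)`. -/
theorem m2_of_ramsey_graph {α β : Type} [Fintype α] [Fintype β]
    (F : SimpleGraph α) (G : SimpleGraph β)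
    (hF : ¬ F.IsAcyclic) (hG : ArrowNNI G F 2) :
    m2 F < m2 G := by
  classical
  by_contra hcon
  push_neg at hcon
  -- notation
  set SF : Set ℝ := {x : ℝ | ∃ H : F.Subgraph, H.edgeSet.Nonempty ∧
    x = d2v H.verts.ncard H.edgeSet.ncard} with hSF
  set SG : Set ℝ := {x : ℝ | ∃ H : G.Subgraph, H.edgeSet.Nonempty ∧
    x = d2v H.verts.ncard H.edgeSet.ncard} with hSG
  have hSFfin : SF.Finite := m2_set_finite F
  have hSGfin : SG.Finite := m2_set_finite G
  set m : ℝ := m2 F with hm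
  have hmem_le : ∀ x ∈ SF, x ≤ m := fun x hx => le_csSup hSFfin.bddAbove hx
  have hmemG_le : ∀ x ∈ SG, x ≤ m := fun x hx =>
    le_trans (le_csSup hSGfin.bddAbove hx) hcon
  have hm2F : m2 F = sSup SF := rfl
  have hm2G : m2 G = sSup SG := rfl
  -- a cycle in F gives a subgraph with v = e = k ≥ 3, hence some x ∈ SF with x > 1
  obtain ⟨x0, hx0SF, hx0gt⟩ : ∃ x ∈ SF, 1 < x := by
    have hF' : ∃ (v : α) (c : F.Walk v v), c.IsCycle := by
      simpa [SimpleGraph.IsAcyclic] using hF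
    obtain ⟨v, c, hc⟩ := hF'
    cases c with
    | nil => exact absurd rfl hc.ne_nil
    | cons hadj p =>
      set c : F.Walk v v := SimpleGraph.Walk.cons hadj p with hcdef
      have hc' : c.IsCycle := hc
      have hlen : 3 ≤ c.length := hc'.three_le_length
      have hVc : c.toSubgraph.verts.ncard = c.length := by
        have h1 : c.toSubgraph.verts = {w | w ∈ p.support} := by
          ext w
          rw [SimpleGraph.Walk.mem_verts_toSubgraph]
          constructor
          · intro hw
            have hw' : w = v ∨ w ∈ p.support := by
              simpa [hcdef, SimpleGraph.Walk.support_cons] using hw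
            rcases hw' with rfl | h
            · exact p.end_mem_support
            · exact h
          · intro hw
            simp only [hcdef, SimpleGraph.Walk.support_cons, List.mem_cons]
            exact Or.inr hw
        have hnodup : p.support.Nodup := by
          have h2 := hc'.support_nodup
          simpa [hcdef, SimpleGraph.Walk.support_cons] using h2
        have h3 : {w | w ∈ p.support} = ↑p.support.toFinset := by ext w; simp
        rw [h1, h3, Set.ncard_coe_finset, List.toFinset_card_of_nodup hnodup,
          hcdef, SimpleGraph.Walk.length_cons, SimpleGraph.Walk.length_support]
      have hEc : c.toSubgraph.edgeSet.ncard = c.length := by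
        have h1 : c.toSubgraph.edgeSet = ↑c.edges.toFinset := by
          rw [SimpleGraph.Walk.edgeSet_toSubgraph]; ext e; simp
        rw [h1, Set.ncard_coe_finset,
          List.toFinset_card_of_nodup hc'.isCircuit.isTrail.edges_nodup,
          SimpleGraph.Walk.length_edges]
      refine ⟨d2v c.toSubgraph.verts.ncard c.toSubgraph.edgeSet.ncard, ⟨c.toSubgraph, ?_, rfl⟩, ?_⟩
      · rw [← Set.ncard_pos (Set.toFinite _), hEc]; omega
      · rw [hVc, hEc, d2v, if_pos hlen]
        have hl3 : (3 : ℝ) ≤ (c.length : ℝ) := by exact_mod_cast hlen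
        rw [one_lt_div (by linarith)]
        linarith
  have hm1 : 1 < m := lt_of_lt_of_le hx0gt (hmem_le _ hx0SF)
  -- m is attained
  have hmSF : m ∈ SF := by
    rw [hm, hm2F]
    exact Set.Nonempty.csSup_mem ⟨x0, hx0SF⟩ hSFfin
  -- choose a densest subgraph F₀ with minimal number of vertices
  set D : Set F.Subgraph := {H : F.Subgraph | H.edgeSet.Nonempty ∧
    d2v H.verts.ncard H.edgeSet.ncard = m} with hD
  have hDne : D.Nonempty := by
    obtain ⟨H1, h1, h2⟩ := hmSF
    exact ⟨H1, h1, h2.symm⟩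
  set TV : Set ℕ := {n | ∃ H ∈ D, H.verts.ncard = n} with hTV
  have hTVne : TV.Nonempty := ⟨_, hDne.choose, hDne.choose_spec, rfl⟩
  obtain ⟨F₀, hF₀D, hkeq⟩ : ∃ H ∈ D, H.verts.ncard = sInf TV := Nat.sInf_mem hTVne
  have hmin : ∀ H ∈ D, F₀.verts.ncard ≤ H.verts.ncard := by
    intro H hH
    rw [hkeq]
    exact Nat.sInf_le ⟨H, hH, rfl⟩
  have hv3 : 3 ≤ F₀.verts.ncard := by
    by_contra h
    have h2 := hF₀D.2
    rw [d2v, if_neg h] at h2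
    rw [← h2] at hm1
    exact lt_irrefl _ hm1
  have hv2pos : (0 : ℝ) < (F₀.verts.ncard : ℝ) - 2 := by
    have : (3 : ℝ) ≤ (F₀.verts.ncard : ℝ) := by exact_mod_cast hv3
    linarith
  have heq : (F₀.edgeSet.ncard : ℝ) - 1 = m * ((F₀.verts.ncard : ℝ) - 2) := by
    have h2 := hF₀D.2
    rw [d2v, if_pos hv3, div_eq_iff (ne_of_gt hv2pos)] at h2
    linarith
  have phi0 : M2Aux.phiR m F₀.verts.ncard F₀.edgeSet.ncard = 0 := by
    unfold M2Aux.phiR; linarith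
  have he3 : 3 ≤ F₀.edgeSet.ncard := by
    have hge1 : (1 : ℝ) ≤ (F₀.verts.ncard : ℝ) - 2 := by
      have : (3 : ℝ) ≤ (F₀.verts.ncard : ℝ) := by exact_mod_cast hv3
      linarith
    have hmul : m * 1 ≤ m * ((F₀.verts.ncard : ℝ) - 2) :=
      mul_le_mul_of_nonneg_left hge1 (by linarith)
    have h2 : (2 : ℝ) < (F₀.edgeSet.ncard : ℝ) := by linarith
    have : 2 < F₀.edgeSet.ncard := by exact_mod_cast h2
    omega
  -- the balancedness facts
  have bal1 : ∀ J : F.Subgraph, J.edgeSet.Nonempty →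
      M2Aux.phiR m J.verts.ncard J.edgeSet.ncard ≤ 0 := by
    intro J hJ
    by_cases h3 : 3 ≤ J.verts.ncard
    · have hle := hmem_le _ (⟨J, hJ, rfl⟩ : d2v J.verts.ncard J.edgeSet.ncard ∈ SF)
      rw [d2v, if_pos h3] at hle
      have hpos : (0 : ℝ) < (J.verts.ncard : ℝ) - 2 := by
        have : (3 : ℝ) ≤ (J.verts.ncard : ℝ) := by exact_mod_cast h3
        linarith
      rw [div_le_iff₀ hpos] at hle
      unfold M2Aux.phiR
      nlinarith
    · have h2 : J.verts.ncard = 2 := by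
        have := M2Aux.verts_ncard_two_le hJ
        omega
      have he1 : J.edgeSet.ncard = 1 := by
        have hle1 := M2Aux.edges_ncard_le_one_of_verts (le_of_eq h2)
        have hpos : 0 < J.edgeSet.ncard := (Set.ncard_pos (Set.toFinite _)).mpr hJ
        omega
      rw [h2, he1]
      unfold M2Aux.phiR
      norm_num
  have bal2 : ∀ J : F.Subgraph, J ≤ F₀ → 2 ≤ J.edgeSet.ncard →
      J.edgeSet.ncard < F₀.edgeSet.ncard →
      M2Aux.phiR m J.verts.ncard J.edgeSet.ncard < 0 := by
    intro J hJle h2e hlt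
    have h3 : 3 ≤ J.verts.ncard := by
      by_contra h
      have := M2Aux.edges_ncard_le_one_of_verts (show J.verts.ncard ≤ 2 by omega)
        (Γ := F) (H := J)
      omega
    have hJne : J.edgeSet.Nonempty := (Set.ncard_pos (Set.toFinite _)).mp (by omega)
    have hle := hmem_le _ (⟨J, hJne, rfl⟩ : d2v J.verts.ncard J.edgeSet.ncard ∈ SF)
    rw [d2v, if_pos h3] at hle
    have hpos : (0 : ℝ) < (J.verts.ncard : ℝ) - 2 := by
      have : (3 : ℝ) ≤ (J.verts.ncard : ℝ) := by exact_mod_cast h3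
      linarith
    rw [div_le_iff₀ hpos] at hle
    by_contra hcon
    push_neg at hcon
    unfold M2Aux.phiR at hcon
    have heqJ : (J.edgeSet.ncard : ℝ) - 1 = m * ((J.verts.ncard : ℝ) - 2) := by linarith
    have hJD : J ∈ D := by
      refine ⟨hJne, ?_⟩
      rw [d2v, if_pos h3, div_eq_iff (ne_of_gt hpos)]
      linarith
    have hge := hmin J hJD
    have hle2 : J.verts.ncard ≤ F₀.verts.ncard := Set.ncard_le_ncard hJle.1 (Set.toFinite _)
    have hveq : J.verts.ncard = F₀.verts.ncard := by omega
    have : (J.edgeSet.ncard : ℝ) = (F₀.edgeSet.ncard : ℝ) := by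
      rw [hveq] at heqJ
      linarith
    have : J.edgeSet.ncard = F₀.edgeSet.ncard := by exact_mod_cast this
    omega
  have hyp : ∀ C : G.Subgraph, C.edgeSet.Nonempty →
      M2Aux.phiR m C.verts.ncard C.edgeSet.ncard ≤ 0 := by
    intro C hC
    by_cases h3 : 3 ≤ C.verts.ncard
    · have hle := hmemG_le _ (⟨C, hC, rfl⟩ : d2v C.verts.ncard C.edgeSet.ncard ∈ SG)
      rw [d2v, if_pos h3] at hle
      have hpos : (0 : ℝ) < (C.verts.ncard : ℝ) - 2 := by
        have : (3 : ℝ) ≤ (C.verts.ncard : ℝ) := by exact_mod_cast h3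
        linarith
      rw [div_le_iff₀ hpos] at hle
      unfold M2Aux.phiR
      nlinarith
    · have h2 : C.verts.ncard = 2 := by
        have := M2Aux.verts_ncard_two_le hC
        omega
      have he1 : C.edgeSet.ncard = 1 := by
        have hle1 := M2Aux.edges_ncard_le_one_of_verts (le_of_eq h2)
        have hpos : 0 < C.edgeSet.ncard := (Set.ncard_pos (Set.toFinite _)).mpr hC
        omega
      rw [h2, he1]
      unfold M2Aux.phiR
      norm_num
  have S : M2Aux.Config F₀ G m := ⟨hyp, bal1, bal2, phi0, he3⟩
  -- the good colouring
  obtain ⟨c, hcol⟩ := M2Aux.main_colouring S ((⊤ : G.Subgraph).edgeSet.ncard) ⊤ le_rfl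
  obtain ⟨f, hfinj, k, hk⟩ := hG c
  have hcopy : M2Aux.IsCopyIn F₀ (⊤ : G.Subgraph) ⇑f := by
    refine ⟨hfinj.injOn, fun x y hxy => ?_⟩
    rw [Subgraph.top_adj]
    exact f.map_adj (F₀.adj_sub hxy)
  obtain ⟨p, hp, q, hq, hne⟩ := hcol ⇑f hcopy
  have hmono : ∀ e ∈ M2Aux.edgesOf F₀ ⇑f, c e = k := by
    rintro e ⟨e', he', rfl⟩
    induction e' using Sym2.ind with
    | _ x y =>
      rw [Sym2.map_pair_eq]
      exact hk x y (F₀.adj_sub (Subgraph.mem_edgeSet.mp he'))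
  exact hne ((hmono p hp).trans (hmono q hq).symm)
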